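/- arXiv:2003.13677 — 2 statements merged into one kernel-verified Lean document; each statement's English description precedes it below -/
import Mathlib

section
/- Let R be a Noetherian ring of prime characteristic p and 𝔞, J ideals with 𝔞 ⊆ √J. Then for all nonnegative integers e_1, e_2: ν_𝔞^J(p^{e_1+e_2})/p^{e_1+e_2} − ν_𝔞^J(p^{e_1})/p^{e_1} ≤ μ(𝔞)/p^{e_1}, where μ(𝔞) is the minimal number of generators of 𝔞 and ν_𝔞^J(p^e) = max{ m : 𝔞^m ⊄ J^{[p^e]} }. -/
open Filter

section Defs
variable (p : ℕ) {R : Type*} [CommRing R]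

/-- A `p^{-e}`-linear (Cartier) operator on `R`: under the identification of `R^{1/p^e}`
with `R` (sending `f^{1/p^e}` to `f`), these are exactly the `R`-linear maps
`R^{1/p^e} → R`. -/
def IsCartier (e : ℕ) (φ : R →+ R) : Prop :=
  ∀ a x : R, φ (a ^ p ^ e * x) = a * φ x

/-- `R` is `F`-pure: the inclusion `R ⊆ R^{1/p^e}` splits as a map of `R`-modules,
equivalently there is a Cartier operator sending `1` to `1`. -/
def FPure (R : Type*) [CommRing R] : Prop :=
  ∀ e : ℕ, ∃ φ : R →+ R, IsCartier p e φ ∧ φ 1 = 1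

/-- `R` is `F`-finite: `R^{1/p^e}` is a finitely generated `R`-module, i.e. `R` is a
finitely generated module over its subring of `p^e`-th powers. -/
def FFinite (R : Type*) [CommRing R] : Prop :=
  ∀ e : ℕ, ∃ s : Finset R, ∀ x : R, ∃ c : R → R, x = ∑ y ∈ s, c y ^ p ^ e * y

/-- The Frobenius power `J^{[q]}`, generated by the `q`-th powers of elements of `J`. -/
def frobeniusPower (J : Ideal R) (q : ℕ) : Ideal R :=
  Ideal.span ((fun f => f ^ q) '' (J : Set R))

/-- The Cartier contraction `J_e = { f | φ(f^{1/p^e}) ∈ J for all φ ∈ Hom_R(R^{1/p^e}, R) }`. -/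
def cartierContraction (e : ℕ) (J : Ideal R) : Ideal R where
  carrier := { f | ∀ φ : R →+ R, IsCartier p e φ → φ f ∈ J }
  add_mem' := fun ha hb φ hφ => by
    rw [map_add]; exact J.add_mem (ha φ hφ) (hb φ hφ)
  zero_mem' := fun φ hφ => by rw [map_zero]; exact J.zero_mem
  smul_mem' := by
    intro c f hf φ hφ
    have h : IsCartier p e (φ.comp (AddMonoidHom.mulLeft c)) := by
      intro a x
      simp only [AddMonoidHom.coe_comp, Function.comp_apply, AddMonoidHom.coe_mulLeft]
      rw [mul_left_comm]
      exact hφ a (c * x)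
    simpa using hf _ h

/-- The Cartier core `𝒫(J) = ⋂ₛ Jₛ`. -/
def cartierCore (J : Ideal R) : Ideal R := ⨅ s : ℕ, cartierContraction p s J

/-- `J` is uniformly `F`-compatible: `φ(J^{1/p^e}) ⊆ J` for all `e > 0` and all
`φ ∈ Hom_R(R^{1/p^e}, R)`. -/
def UniformlyFCompatible (J : Ideal R) : Prop :=
  ∀ e : ℕ, 0 < e → ∀ φ : R →+ R, IsCartier p e φ → ∀ f ∈ J, φ f ∈ J

/-- `ν_𝔞^J(q) = max { m | 𝔞^m ⊄ J^{[q]} }`. -/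
noncomputable def nuNum (𝔞 J : Ideal R) (q : ℕ) : ℕ :=
  sSup { m : ℕ | ¬ 𝔞 ^ m ≤ frobeniusPower J q }

/-- `b_𝔞^J(p^e) = max { t | 𝔞^t ⊄ J_e }`. -/
noncomputable def bNum (𝔞 J : Ideal R) (e : ℕ) : ℕ :=
  sSup { t : ℕ | ¬ 𝔞 ^ t ≤ cartierContraction p e J }

/-- `μ(𝔞)`, the minimal number of generators of `𝔞`. -/
noncomputable def muGen (𝔞 : Ideal R) : ℕ :=
  sInf { k : ℕ | ∃ s : Finset R, s.card = k ∧ Ideal.span (s : Set R) = 𝔞 }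

end Defs

open Pointwise

section Aux
variable {R : Type*} [CommRing R]

lemma frobeniusPower_mono' {I J : Ideal R} (h : I ≤ J) (q : ℕ) :
    frobeniusPower I q ≤ frobeniusPower J q :=
  Ideal.span_mono (Set.image_mono h)

lemma pow_mem_frobeniusPower' {I : Ideal R} {x : R} (hx : x ∈ I) (q : ℕ) :
    x ^ q ∈ frobeniusPower I q :=
  Ideal.subset_span ⟨x, hx, rfl⟩

lemma frobeniusPower_comp' (p : ℕ) (hp : p.Prime) [CharP R p] (J : Ideal R) (e₁ e₂ : ℕ) :
    frobeniusPower (frobeniusPower J (p ^ e₁)) (p ^ e₂) ≤ frobeniusPower J (p ^ (e₁ + e₂)) := by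
  haveI : Fact p.Prime := ⟨hp⟩
  rw [frobeniusPower, Ideal.span_le]
  rintro _ ⟨x, hx, rfl⟩
  show x ^ p ^ e₂ ∈ _
  have hx' : iterateFrobenius R p e₂ x ∈
      Ideal.map (iterateFrobenius R p e₂) (frobeniusPower J (p ^ e₁)) :=
    Ideal.mem_map_of_mem _ hx
  rw [frobeniusPower, Ideal.map_span] at hx'
  rw [show x ^ p ^ e₂ = iterateFrobenius R p e₂ x from rfl]
  refine Ideal.span_mono ?_ hx'
  rintro _ ⟨_, ⟨f, hf, rfl⟩, rfl⟩
  exact ⟨f, hf, by rw [iterateFrobenius_def, ← pow_mul, ← pow_add]⟩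

lemma prod_pow_mem_pow_sum' {𝔞 : Ideal R} (s : Finset R) (hs : ∀ y ∈ s, y ∈ 𝔞) (b : R → ℕ) :
    ∏ y ∈ s, y ^ b y ∈ 𝔞 ^ (∑ y ∈ s, b y) := by
  classical
  induction s using Finset.induction with
  | empty => simp [Ideal.one_eq_top]
  | @insert a t ha ih =>
    rw [Finset.prod_insert ha, Finset.sum_insert ha, pow_add]
    exact Ideal.mul_mem_mul (Ideal.pow_mem_pow (hs a (Finset.mem_insert_self a t)) _)
      (ih fun y hy => hs y (Finset.mem_insert_of_mem hy))

/-- The pigeonhole lemma: `𝔞^{mq + μ(q-1) + 1} ⊆ (𝔞^{m+1})^{[q]}`. -/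
lemma pow_le_frobeniusPower_pow' (𝔞 : Ideal R) (s : Finset R)
    (hs : Ideal.span (s : Set R) = 𝔞) (q : ℕ) (hq : 1 ≤ q) (m : ℕ) :
    𝔞 ^ (m * q + s.card * (q - 1) + 1) ≤ frobeniusPower (𝔞 ^ (m + 1)) q := by
  classical
  set n := m * q + s.card * (q - 1) + 1 with hn
  rw [← hs]
  refine le_trans (le_of_eq (Submodule.span_pow (↑s : Set R) n)) ?_
  rw [Submodule.span_le]
  intro x hx
  rw [Set.mem_pow] at hx
  obtain ⟨f, rfl⟩ := hx
  rw [List.prod_ofFn]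
  set c : R → ℕ := fun y => (Finset.univ.filter (fun i : Fin n => (f i : R) = y)).card with hc
  have hmaps : ∀ i ∈ (Finset.univ : Finset (Fin n)), (f i : R) ∈ s := fun i _ => (f i).2
  have hprod : ∏ i, (f i : R) = ∏ y ∈ s, y ^ c y := by
    rw [← Finset.prod_fiberwise_of_maps_to hmaps (fun i => (f i : R))]
    refine Finset.prod_congr rfl fun y _ => ?_
    rw [Finset.prod_congr rfl (fun i hi => (Finset.mem_filter.1 hi).2), Finset.prod_const, hc]
  have hsum : ∑ y ∈ s, c y = n := by
    rw [hc, ← Finset.card_eq_sum_card_fiberwise hmaps, Finset.card_univ, Fintype.card_fin]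
  rw [hprod]
  have hsplit : ∀ y ∈ s, y ^ c y = (y ^ (c y / q)) ^ q * y ^ (c y % q) := by
    intro y _
    rw [← pow_mul, ← pow_add, Nat.div_add_mod']
  rw [Finset.prod_congr rfl hsplit, Finset.prod_mul_distrib, Finset.prod_pow]
  have hbsum : m + 1 ≤ ∑ y ∈ s, c y / q := by
    by_contra hlt
    push_neg at hlt
    have h1 : ∀ y ∈ s, c y ≤ q * (c y / q) + (q - 1) := fun y _ => by
      have := Nat.div_add_mod (c y) q
      have hmod : c y % q ≤ q - 1 := Nat.le_sub_one_of_lt (Nat.mod_lt _ hq)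
      omega
    have h2 : n ≤ q * (∑ y ∈ s, c y / q) + s.card * (q - 1) := by
      calc n = ∑ y ∈ s, c y := hsum.symm
        _ ≤ ∑ y ∈ s, (q * (c y / q) + (q - 1)) := Finset.sum_le_sum h1
        _ = q * (∑ y ∈ s, c y / q) + s.card * (q - 1) := by
            rw [Finset.sum_add_distrib, Finset.mul_sum, Finset.sum_const, smul_eq_mul]
    have h3 : ∑ y ∈ s, c y / q ≤ m := by omega
    have h4 : m * q + 1 ≤ q * (∑ y ∈ s, c y / q) := by omega
    have h5 : q * (∑ y ∈ s, c y / q) ≤ q * m := Nat.mul_le_mul_left q h3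
    rw [mul_comm q m] at h5
    omega
  have hz : (∏ y ∈ s, y ^ (c y / q)) ∈ 𝔞 ^ (m + 1) := by
    refine Ideal.pow_le_pow_right hbsum ?_
    refine prod_pow_mem_pow_sum' s (fun y hy => ?_) _
    rw [← hs]; exact Ideal.subset_span hy
  rw [hs]
  exact Ideal.mul_mem_right _ _ (pow_mem_frobeniusPower' hz q)

end Aux


/-- For ideals `𝔞 ⊆ √J` in a Noetherian ring of prime characteristic `p`,
`ν_𝔞^J(p^{e₁+e₂})/p^{e₁+e₂} − ν_𝔞^J(p^{e₁})/p^{e₁} ≤ μ(𝔞)/p^{e₁}`. -/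
theorem nu_quotients_diff_le_mu {R : Type*} [CommRing R] [IsNoetherianRing R]
    (p : ℕ) (hp : p.Prime) [CharP R p]
    (𝔞 J : Ideal R) (h𝔞 : 𝔞 ≤ J.radical) (e₁ e₂ : ℕ) :
    (nuNum 𝔞 J (p ^ (e₁ + e₂)) : ℝ) / (p : ℝ) ^ (e₁ + e₂)
      - (nuNum 𝔞 J (p ^ e₁) : ℝ) / (p : ℝ) ^ e₁
      ≤ (muGen 𝔞 : ℝ) / (p : ℝ) ^ e₁ := by
  classical
  haveI : Fact p.Prime := ⟨hp⟩
  have hp1 : 1 ≤ p := hp.one_lt.le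
  -- a minimal generating set
  have hfg : 𝔞.FG := IsNoetherian.noetherian 𝔞
  obtain ⟨s₀, hs₀⟩ := hfg
  have hmem : muGen 𝔞 ∈ {k : ℕ | ∃ s : Finset R, s.card = k ∧ Ideal.span (s : Set R) = 𝔞} :=
    Nat.sInf_mem ⟨s₀.card, s₀, rfl, hs₀⟩
  obtain ⟨s, hcard, hspan⟩ := hmem
  set μ := muGen 𝔞 with hμ
  -- a power of 𝔞 lands in J
  obtain ⟨N₀, hN₀⟩ := Ideal.exists_pow_le_of_le_radical_of_fg_radical h𝔞
    (IsNoetherian.noetherian _)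
  -- general bound: for every e, large powers of 𝔞 land in J^{[p^e]}
  have key : ∀ e n : ℕ, N₀ * p ^ e + μ * (p ^ e - 1) + 1 ≤ n →
      𝔞 ^ n ≤ frobeniusPower J (p ^ e) := by
    intro e n hn
    have hqe : 1 ≤ p ^ e := Nat.one_le_pow _ _ hp.pos
    calc 𝔞 ^ n ≤ 𝔞 ^ (N₀ * p ^ e + μ * (p ^ e - 1) + 1) := Ideal.pow_le_pow_right hn
      _ ≤ frobeniusPower (𝔞 ^ (N₀ + 1)) (p ^ e) := by
          rw [← hcard]; exact pow_le_frobeniusPower_pow' 𝔞 s hspan _ hqe N₀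
      _ ≤ frobeniusPower J (p ^ e) :=
          frobeniusPower_mono' (le_trans (Ideal.pow_le_pow_right (Nat.le_succ N₀)) hN₀) _
  have bdd : ∀ e : ℕ, BddAbove {m : ℕ | ¬ 𝔞 ^ m ≤ frobeniusPower J (p ^ e)} := by
    intro e
    refine ⟨N₀ * p ^ e + μ * (p ^ e - 1) + 1, fun n hn => ?_⟩
    by_contra hlt
    exact hn (key e n (by omega))
  set ν₁ := nuNum 𝔞 J (p ^ e₁) with hν₁
  set ν₂ := nuNum 𝔞 J (p ^ (e₁ + e₂)) with hν₂
  -- 𝔞^{ν₁+1} ⊆ J^{[p^{e₁}]}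
  have hstep : 𝔞 ^ (ν₁ + 1) ≤ frobeniusPower J (p ^ e₁) := by
    by_contra hcon
    have : ν₁ + 1 ≤ ν₁ := le_csSup (bdd e₁) hcon
    omega
  -- hence 𝔞^{ν₁ p^{e₂} + μ(p^{e₂}-1)+1} ⊆ J^{[p^{e₁+e₂}]}
  have hq₂ : 1 ≤ p ^ e₂ := Nat.one_le_pow _ _ hp.pos
  have hbig : 𝔞 ^ (ν₁ * p ^ e₂ + μ * (p ^ e₂ - 1) + 1) ≤ frobeniusPower J (p ^ (e₁ + e₂)) := by
    calc 𝔞 ^ (ν₁ * p ^ e₂ + μ * (p ^ e₂ - 1) + 1)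
        ≤ frobeniusPower (𝔞 ^ (ν₁ + 1)) (p ^ e₂) := by
          rw [← hcard]; exact pow_le_frobeniusPower_pow' 𝔞 s hspan _ hq₂ ν₁
      _ ≤ frobeniusPower (frobeniusPower J (p ^ e₁)) (p ^ e₂) := frobeniusPower_mono' hstep _
      _ ≤ frobeniusPower J (p ^ (e₁ + e₂)) := frobeniusPower_comp' p hp J e₁ e₂
  -- so ν₂ ≤ ν₁ p^{e₂} + μ (p^{e₂}-1) ≤ (ν₁ + μ) p^{e₂}
  have hν₂le : ν₂ ≤ (ν₁ + μ) * p ^ e₂ := by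
    have hub : ν₂ ≤ ν₁ * p ^ e₂ + μ * (p ^ e₂ - 1) := by
      refine csSup_le' fun n hn => ?_
      by_contra hlt
      push_neg at hlt
      exact hn ((Ideal.pow_le_pow_right (by omega)).trans hbig)
    have : μ * (p ^ e₂ - 1) ≤ μ * p ^ e₂ := Nat.mul_le_mul_left _ (Nat.sub_le _ _)
    calc ν₂ ≤ ν₁ * p ^ e₂ + μ * (p ^ e₂ - 1) := hub
      _ ≤ ν₁ * p ^ e₂ + μ * p ^ e₂ := by omega
      _ = (ν₁ + μ) * p ^ e₂ := (add_mul _ _ _).symm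
  -- now the real arithmetic
  have hp0 : (0 : ℝ) < (p : ℝ) := by exact_mod_cast hp.pos
  have h1 : (0 : ℝ) < (p : ℝ) ^ e₁ := pow_pos hp0 _
  have h2 : (0 : ℝ) < (p : ℝ) ^ (e₁ + e₂) := pow_pos hp0 _
  rw [sub_le_iff_le_add, ← add_div, div_le_div_iff₀ h2 h1]
  have hcast : (ν₂ : ℝ) ≤ ((ν₁ : ℝ) + μ) * (p : ℝ) ^ e₂ := by
    have := hν₂le
    push_cast [← Nat.cast_le (α := ℝ)] at this ⊢
    exact_mod_cast this
  calc (ν₂ : ℝ) * (p : ℝ) ^ e₁ ≤ ((ν₁ : ℝ) + μ) * (p : ℝ) ^ e₂ * (p : ℝ) ^ e₁ :=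
        mul_le_mul_of_nonneg_right hcast h1.le
    _ = ((μ : ℝ) + ν₁) * (p : ℝ) ^ (e₁ + e₂) := by ring
end

section
/- Let S = K[x_1,...,x_n] with K an F-finite field of characteristic p, I a squarefree monomial ideal, R = S/I, and 𝔮 a monomial prime ideal of R. Then for every e ∈ ℕ and q = p^e, the Cartier contraction satisfies 𝔮_e = 𝔮^{[q]} + 𝒫(𝔮), where 𝒫(𝔮) = ⋂_s 𝔮_s is the Cartier core of 𝔮. -/
open Filter

open MvPolynomial

/-- `I` is a squarefree monomial ideal of `K[x₁,…,xₙ]`: it is generated by squarefree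
monomials `x^N = ∏_{i ∈ N} xᵢ`. -/
def IsSquarefreeMonomialIdeal {K : Type*} [Field K] {n : ℕ}
    (I : Ideal (MvPolynomial (Fin n) K)) : Prop :=
  ∃ A : Set (Finset (Fin n)),
    I = Ideal.span ((fun N => monomial (∑ i ∈ N, Finsupp.single i 1) (1 : K)) '' A)

/-- An ideal of the Stanley–Reisner ring `R = S ⧸ I` is a monomial ideal when it is
generated by images of monomials of `S`. -/
def IsMonomialQuotIdeal {K : Type*} [Field K] {n : ℕ}
    (I : Ideal (MvPolynomial (Fin n) K)) (J : Ideal (MvPolynomial (Fin n) K ⧸ I)) : Prop :=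
  ∃ B : Set (Fin n →₀ ℕ),
    J = Ideal.span ((fun a => Ideal.Quotient.mk I (monomial a (1 : K))) '' B)




open MvPolynomial

namespace SRAux

variable {K : Type*} [Field K] {n : ℕ}

/-- Indicator finsupp of a finset. -/
noncomputable def ind (G : Finset (Fin n)) : Fin n →₀ ℕ := ∑ i ∈ G, Finsupp.single i 1

lemma ind_apply (G : Finset (Fin n)) (j : Fin n) :
    ind G j = if j ∈ G then 1 else 0 := by
  classical
  simp only [ind, Finsupp.finset_sum_apply, Finsupp.single_apply]
  rw [Finset.sum_ite_eq' G j (fun _ => (1:ℕ))]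

lemma ind_support (G : Finset (Fin n)) : (ind G).support = G := by
  ext j
  simp [Finsupp.mem_support_iff, ind_apply]

/-- Nonface predicate. -/
def NF (A : Set (Finset (Fin n))) (s : Finset (Fin n)) : Prop := ∃ N ∈ A, N ⊆ s

lemma NF.mono {A : Set (Finset (Fin n))} {s t : Finset (Fin n)} (h : NF A s) (hst : s ⊆ t) :
    NF A t := by obtain ⟨N, hN, hNs⟩ := h; exact ⟨N, hN, hNs.trans hst⟩

/-- Facet: maximal face. -/
def Facet (A : Set (Finset (Fin n))) (G : Finset (Fin n)) : Prop :=
  ¬ NF A G ∧ ∀ G', ¬ NF A G' → G ⊆ G' → G' = G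

lemma exists_facet {A : Set (Finset (Fin n))} {s : Finset (Fin n)} (hs : ¬ NF A s) :
    ∃ G, Facet A G ∧ s ⊆ G := by
  classical
  obtain ⟨G, hG, hmax⟩ := Finset.exists_max_image
    ((Finset.univ : Finset (Finset (Fin n))).filter (fun G => ¬ NF A G ∧ s ⊆ G))
    Finset.card ⟨s, by simp [hs]⟩
  simp only [Finset.mem_filter, Finset.mem_univ, true_and] at hG hmax
  refine ⟨G, ⟨hG.1, fun G' hG' hGG' => ?_⟩, hG.2⟩
  exact (Finset.eq_of_subset_of_card_le hGG' (hmax G' ⟨hG', hG.2.trans hGG'⟩)).symm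

def TI (A : Set (Finset (Fin n))) : Set (Fin n →₀ ℕ) := {a | NF A a.support}

def TQ (A : Set (Finset (Fin n))) (W : Finset (Fin n)) : Set (Fin n →₀ ℕ) :=
  TI A ∪ {a | ∃ i, i ∉ W ∧ a i ≠ 0}

def Tq (A : Set (Finset (Fin n))) (W : Finset (Fin n)) (q : ℕ) : Set (Fin n →₀ ℕ) :=
  TI A ∪ {a | ∃ i, i ∉ W ∧ q ≤ a i}

def TP (A : Set (Finset (Fin n))) (W : Finset (Fin n)) : Set (Fin n →₀ ℕ) :=
  {a | ∃ G, Facet A G ∧ W ⊆ G ∧ ¬ a.support ⊆ G}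

def UpClosed (T : Set (Fin n →₀ ℕ)) : Prop := ∀ a ∈ T, ∀ b, a + b ∈ T

lemma support_subset_support_add (a b : Fin n →₀ ℕ) : a.support ⊆ (a + b).support := by
  intro i hi
  simp only [Finsupp.mem_support_iff, Finsupp.add_apply] at *
  omega

lemma support_add_eq (a b : Fin n →₀ ℕ) : (a + b).support = a.support ∪ b.support := by
  ext i
  simp only [Finsupp.mem_support_iff, Finsupp.add_apply, Finset.mem_union]
  omega

lemma TI_up (A : Set (Finset (Fin n))) : UpClosed (TI A) :=
  fun a ha b => ha.mono (support_subset_support_add a b)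

lemma TQ_up (A : Set (Finset (Fin n))) (W : Finset (Fin n)) : UpClosed (TQ A W) := by
  rintro a (ha | ⟨i, hiW, hi⟩) b
  · exact Or.inl (TI_up A a ha b)
  · exact Or.inr ⟨i, hiW, by simp only [Finsupp.add_apply]; omega⟩

lemma Tq_up (A : Set (Finset (Fin n))) (W : Finset (Fin n)) (q : ℕ) : UpClosed (Tq A W q) := by
  rintro a (ha | ⟨i, hiW, hi⟩) b
  · exact Or.inl (TI_up A a ha b)
  · exact Or.inr ⟨i, hiW, by simp only [Finsupp.add_apply]; omega⟩

lemma TP_up (A : Set (Finset (Fin n))) (W : Finset (Fin n)) : UpClosed (TP A W) := by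
  rintro a ⟨G, hG, hWG, hsub⟩ b
  exact ⟨G, hG, hWG, fun hs => hsub (((support_subset_support_add a b).trans hs))⟩

/-- The ideal generated by the monomials with exponents in `T`. -/
noncomputable def spanMono (K : Type*) [Field K] {n : ℕ} (T : Set (Fin n →₀ ℕ)) :
    Ideal (MvPolynomial (Fin n) K) :=
  Ideal.span ((fun a => monomial a (1 : K)) '' T)

lemma spanMono_union (T T' : Set (Fin n →₀ ℕ)) :
    spanMono K (T ∪ T') = spanMono K T ⊔ spanMono K T' := by
  rw [spanMono, Set.image_union, Ideal.span_union]; rfl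

lemma mem_spanMono_iff {T : Set (Fin n →₀ ℕ)} (hT : UpClosed T)
    {f : MvPolynomial (Fin n) K} :
    f ∈ spanMono K T ↔ ∀ a ∈ f.support, a ∈ T := by
  classical
  constructor
  · intro hf
    let J : Ideal (MvPolynomial (Fin n) K) :=
      { carrier := {g | ∀ a ∈ g.support, a ∈ T}
        add_mem' := by
          intro g h hg hh a ha
          have := MvPolynomial.support_add ha
          rcases Finset.mem_union.mp this with h' | h'
          · exact hg a h'
          · exact hh a h'
        zero_mem' := by intro a ha; simp at ha
        smul_mem' := by
          intro c g hg a ha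
          have := MvPolynomial.support_mul c g ha
          rw [Finset.mem_add] at this
          obtain ⟨x, hx, y, hy, rfl⟩ := this
          rw [add_comm]
          exact hT y (hg y hy) x }
    have hle : spanMono K T ≤ J := by
      rw [spanMono, Ideal.span_le]
      rintro g ⟨a, haT, rfl⟩ b hb
      rw [MvPolynomial.support_monomial] at hb
      simp only [one_ne_zero, if_false, Finset.mem_singleton] at hb
      subst hb; exact haT
    exact hle hf
  · intro hf
    rw [← MvPolynomial.support_sum_monomial_coeff f]
    refine Ideal.sum_mem _ fun a ha => ?_
    have : monomial a (coeff a f) = C (coeff a f) * monomial a 1 := by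
      rw [MvPolynomial.C_mul_monomial, mul_one]
    rw [this]
    exact Ideal.mul_mem_left _ _ (Ideal.subset_span ⟨a, hf a ha, rfl⟩)

lemma monomial_mem_spanMono {T : Set (Fin n →₀ ℕ)} {a : Fin n →₀ ℕ} (ha : a ∈ T) :
    (monomial a (1:K)) ∈ spanMono K T := Ideal.subset_span ⟨a, ha, rfl⟩

lemma le_ind_of_subset {N : Finset (Fin n)} {a : Fin n →₀ ℕ} (h : ↑N ⊆ a.support) :
    a - ind N + ind N = a := by
  ext i
  rw [Finsupp.add_apply, Finsupp.tsub_apply, ind_apply]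
  by_cases hi : i ∈ N
  · have : a i ≠ 0 := Finsupp.mem_support_iff.mp (h hi)
    simp [hi]; omega
  · simp [hi]

/-- `I` as span of all monomials with nonface support. -/
lemma spanA_eq_spanMono_TI (A : Set (Finset (Fin n))) :
    Ideal.span ((fun N => monomial (∑ i ∈ N, Finsupp.single i 1) (1:K)) '' A)
      = spanMono K (TI A) := by
  apply le_antisymm
  · rw [Ideal.span_le]
    rintro g ⟨N, hN, rfl⟩
    exact monomial_mem_spanMono ⟨N, hN, by rw [show (∑ i ∈ N, Finsupp.single i (1:ℕ)) = ind N from rfl, ind_support]⟩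
  · rw [spanMono, Ideal.span_le]
    rintro g ⟨a, ⟨N, hN, hNa⟩, rfl⟩
    dsimp only
    have : monomial a (1:K) = monomial (a - ind N) 1 * monomial (ind N) 1 := by
      rw [MvPolynomial.monomial_mul, le_ind_of_subset hNa, one_mul]
    rw [this]
    exact Ideal.mul_mem_left _ _ (Ideal.subset_span ⟨N, hN, rfl⟩)

end SRAux

namespace SRAux

variable {K : Type*} [Field K] {n : ℕ}

lemma spanMono_mono {T T' : Set (Fin n →₀ ℕ)} (h : T ⊆ T') :
    spanMono K T ≤ spanMono K T' := Ideal.span_mono (Set.image_mono h)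

lemma UpClosed.union {T T' : Set (Fin n →₀ ℕ)} (hT : UpClosed T) (hT' : UpClosed T') :
    UpClosed (T ∪ T') := by
  rintro a (ha | ha) b
  · exact Or.inl (hT a ha b)
  · exact Or.inr (hT' a ha b)

lemma support_smul_eq {q : ℕ} (hq : 0 < q) (a : Fin n →₀ ℕ) :
    (q • a).support = a.support := by
  ext i
  simp only [Finsupp.mem_support_iff, Finsupp.smul_apply, smul_eq_mul]
  constructor
  · intro h h0; exact h (by rw [h0, Nat.mul_zero])
  · intro h; exact Nat.mul_ne_zero hq.ne' h

/-- Annihilator of a face monomial: if `f·x^{1_G} ∈ I` for a face `G`, then every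
monomial of `f` is a nonface or has support not inside `G`. -/
lemma ann_lemma {A : Set (Finset (Fin n))} {G : Finset (Fin n)} (hG : ¬ NF A G)
    {f : MvPolynomial (Fin n) K}
    (hf : f * monomial (ind G) 1 ∈ spanMono K (TI A)) :
    ∀ a ∈ f.support, a ∈ TI A ∪ {a : Fin n →₀ ℕ | ¬ ↑a.support ⊆ G} := by
  intro a ha
  by_contra hc
  simp only [Set.mem_union, Set.mem_setOf_eq, not_or, not_not] at hc
  obtain ⟨haI, hasub⟩ := hc
  have hco : coeff (a + ind G) (f * monomial (ind G) 1) = coeff a f :=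
    (MvPolynomial.coeff_mul_monomial a (ind G) 1 f).trans (mul_one _)
  have hmem : (a + ind G) ∈ TI A := by
    rw [mem_spanMono_iff (TI_up A)] at hf
    apply hf
    rw [MvPolynomial.mem_support_iff, hco]
    exact MvPolynomial.mem_support_iff.mp ha
  obtain ⟨N, hN, hNs⟩ := hmem
  apply hG
  refine ⟨N, hN, ?_⟩
  intro j hj
  have := hNs hj
  rw [support_add_eq, Finset.mem_union, ind_support] at this
  rcases this with h | h
  · exact hasub h
  · exact h

/-- face monomials as products of variables. -/
lemma monomial_ind_eq_prod (G : Finset (Fin n)) :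
    (monomial (ind G) (1 : K)) = ∏ i ∈ G, X i := by
  classical
  rw [MvPolynomial.monomial_eq, C_1, one_mul, Finsupp.prod]
  rw [ind_support]
  apply Finset.prod_congr rfl
  intro i hi
  rw [ind_apply, if_pos hi, pow_one]

end SRAux

open MvPolynomial
open scoped Classical

namespace SRAux2

variable {K : Type*} [Field K] {n : ℕ}

/-- The basic `p^{-e}`-linear operator on the polynomial ring: sends `x^{u+qb}c` to
`x^{b+t} φ0 c` and kills monomials whose exponent is not `≡ u (mod q)`. -/
noncomputable def Phi (u t : Fin n →₀ ℕ) (q : ℕ) (φ0 : K →+ K) :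
    MvPolynomial (Fin n) K →+ MvPolynomial (Fin n) K :=
  Finsupp.liftAddHom (fun a =>
    if h : ∃ b, a = u + q • b then ((monomial (h.choose + t)).toAddMonoidHom.comp φ0) else 0)
    |>.comp AddMonoidAlgebra.coeffAddEquiv.toAddMonoidHom

lemma Phi_monomial (u t : Fin n →₀ ℕ) (q : ℕ) (φ0 : K →+ K) (s : Fin n →₀ ℕ) (c : K) :
    Phi u t q φ0 (monomial s c) =
      if h : ∃ b, s = u + q • b then monomial (h.choose + t) (φ0 c) else 0 := by
  rw [← MvPolynomial.single_eq_monomial]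
  show Finsupp.liftAddHom _ (Finsupp.single s c) = _
  rw [Finsupp.liftAddHom_apply_single]
  split_ifs with h
  · rfl
  · rfl

lemma rep_unique {u b b' : Fin n →₀ ℕ} {q : ℕ} (hq : 0 < q)
    (h : u + q • b = u + q • b') : b = b' := by
  have h2 : q • b = q • b' := add_left_cancel h
  ext i
  have h3 : q * b i = q * b' i := by
    have := congrArg (fun f : Fin n →₀ ℕ => f i) h2
    simpa using this
  exact Nat.eq_of_mul_eq_mul_left hq h3

lemma Phi_monomial_rep {u t : Fin n →₀ ℕ} {q : ℕ} (hq : 0 < q) (φ0 : K →+ K)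
    {s b : Fin n →₀ ℕ} (hb : s = u + q • b) (c : K) :
    Phi u t q φ0 (monomial s c) = monomial (b + t) (φ0 c) := by
  have hch : (⟨b, hb⟩ : ∃ b, s = u + q • b).choose = b :=
    rep_unique hq ((Exists.choose_spec (⟨b, hb⟩ : ∃ b, s = u + q • b)).symm.trans hb)
  rw [Phi_monomial, dif_pos ⟨b, hb⟩, hch]

lemma Phi_monomial_nonrep {u t : Fin n →₀ ℕ} {q : ℕ} (φ0 : K →+ K)
    {s : Fin n →₀ ℕ} (hb : ¬ ∃ b, s = u + q • b) (c : K) :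
    Phi u t q φ0 (monomial s c) = 0 := by
  rw [Phi_monomial, dif_neg hb]

lemma coeff_Phi {u t : Fin n →₀ ℕ} {q : ℕ} (hq : 0 < q) (φ0 : K →+ K)
    (f : MvPolynomial (Fin n) K) (b : Fin n →₀ ℕ) :
    coeff (b + t) (Phi u t q φ0 f) = φ0 (coeff (u + q • b) f) := by
  induction f using MvPolynomial.induction_on' with
  | monomial s c =>
    by_cases h : ∃ b', s = u + q • b'
    · obtain ⟨b', hb'⟩ := h
      rw [Phi_monomial_rep hq φ0 hb', MvPolynomial.coeff_monomial, MvPolynomial.coeff_monomial]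
      by_cases hbb : b' = b
      · rw [if_pos (by rw [hbb]), if_pos (by rw [← hbb]; exact hb')]
      · rw [if_neg (fun hc => hbb (add_right_cancel hc)),
          if_neg (fun hc => hbb (rep_unique hq (hb'.symm.trans hc))), map_zero]
    · rw [Phi_monomial_nonrep φ0 h, MvPolynomial.coeff_monomial, coeff_zero,
        if_neg (fun hc => h ⟨b, hc⟩), map_zero]
  | add f g hf hg =>
    rw [map_add, MvPolynomial.coeff_add, MvPolynomial.coeff_add, hf, hg, map_add]

lemma coeff_Phi_ne_zero {u t : Fin n →₀ ℕ} {q : ℕ} (hq : 0 < q) (φ0 : K →+ K)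
    (f : MvPolynomial (Fin n) K) (c : Fin n →₀ ℕ)
    (hc : coeff c (Phi u t q φ0 f) ≠ 0) :
    ∃ b, c = b + t := by
  induction f using MvPolynomial.induction_on' with
  | monomial s d =>
    by_cases h : ∃ b', s = u + q • b'
    · obtain ⟨b', hb'⟩ := h
      rw [Phi_monomial_rep hq φ0 hb', MvPolynomial.coeff_monomial] at hc
      split_ifs at hc with h'
      · exact ⟨b', h'.symm⟩
      · exact absurd rfl hc
    · rw [Phi_monomial_nonrep φ0 h, coeff_zero] at hc; exact absurd rfl hc
  | add f g hf hg =>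
    rw [map_add, MvPolynomial.coeff_add] at hc
    by_cases h1 : coeff c (Phi u t q φ0 f) = 0
    · exact hg (by intro h2; exact hc (by rw [h1, h2, add_zero]))
    · exact hf h1

/-- The key Cartier identity for `Phi`, assuming all entries of `u` are `< q = p^e`. -/
lemma Phi_cartier {p : ℕ} [hF : Fact p.Prime] [CharP K p] {e : ℕ}
    {u t : Fin n →₀ ℕ} (hu : ∀ i, u i < p ^ e) (φ0 : K →+ K)
    (hφ0 : ∀ c d : K, φ0 (c ^ p ^ e * d) = c * φ0 d)
    (f g : MvPolynomial (Fin n) K) :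
    Phi u t (p ^ e) φ0 (f ^ p ^ e * g) = f * Phi u t (p ^ e) φ0 g := by
  have hq : 0 < p ^ e := pow_pos hF.out.pos e
  induction f using MvPolynomial.induction_on' generalizing g with
  | monomial m c =>
    induction g using MvPolynomial.induction_on' with
    | monomial a d =>
      rw [MvPolynomial.monomial_pow, MvPolynomial.monomial_mul]
      by_cases h : ∃ b, a = u + (p ^ e) • b
      · obtain ⟨b, hb⟩ := h
        have hrep : p ^ e • m + a = u + (p ^ e) • (m + b) := by
          rw [hb, smul_add]; abel
        rw [Phi_monomial_rep hq φ0 hrep, Phi_monomial_rep hq φ0 hb,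
          MvPolynomial.monomial_mul, hφ0, add_assoc]
      · have h' : ¬ ∃ b', p ^ e • m + a = u + (p ^ e) • b' := by
          rintro ⟨b', hb'⟩
          apply h
          have hmb : ∀ i, m i ≤ b' i := by
            intro i
            have hi := congrArg (fun f : Fin n →₀ ℕ => f i) hb'
            simp only [Finsupp.add_apply, Finsupp.smul_apply, smul_eq_mul] at hi
            by_contra hlt
            push_neg at hlt
            have h2 : p ^ e * (b' i + 1) ≤ p ^ e * m i := Nat.mul_le_mul_left _ hlt
            rw [Nat.mul_add, Nat.mul_one] at h2
            have h3 := hu i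
            have h4 : a i ≥ 0 := Nat.zero_le _
            linarith
          refine ⟨b' - m, ?_⟩
          ext i
          have hi := congrArg (fun f : Fin n →₀ ℕ => f i) hb'
          simp only [Finsupp.add_apply, Finsupp.smul_apply, smul_eq_mul] at hi ⊢
          rw [Finsupp.tsub_apply]
          obtain ⟨k, hk⟩ := Nat.exists_eq_add_of_le (hmb i)
          rw [hk, Nat.add_sub_cancel_left]
          rw [hk, Nat.mul_add] at hi
          linarith
        rw [Phi_monomial_nonrep φ0 h', Phi_monomial_nonrep φ0 h, mul_zero]
    | add g1 g2 hg1 hg2 =>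
      rw [mul_add, map_add, hg1, hg2, map_add, mul_add]
  | add f1 f2 hf1 hf2 =>
    have : (f1 + f2) ^ p ^ e = f1 ^ p ^ e + f2 ^ p ^ e := add_pow_char_pow _ _ _ _
    rw [this, add_mul, map_add, hf1, hf2, add_mul]

end SRAux2

open MvPolynomial

namespace SRAux3

set_option synthInstance.maxHeartbeats 1000000 in
set_option maxHeartbeats 1000000 in
/-- On any field of characteristic `p` there is a Cartier operator at level `e`
sending a prescribed nonzero element `z` to `1`. -/
lemma exists_cartier_on_field (K : Type*) [Field K] (p e : ℕ) (hp : p.Prime) [CharP K p]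
    {z : K} (hz : z ≠ 0) :
    ∃ φ0 : K →+ K, (∀ c d : K, φ0 (c ^ p ^ e * d) = c * φ0 d) ∧ φ0 z = 1 := by
  haveI : Fact p.Prime := ⟨hp⟩
  haveI : ExpChar K p := .prime hp
  set F := iterateFrobenius K p e with hF
  have hFinj : Function.Injective F := F.injective
  set k' : Subfield K := F.fieldRange with hk'
  haveI : NoZeroSMulDivisors k' K := by
    constructor
    intro c x h
    rw [Subfield.smul_def, smul_eq_mul] at h
    rcases mul_eq_zero.mp h with h | h
    · exact Or.inl (by exact_mod_cast h)
    · exact Or.inr h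
  -- the "inverse Frobenius" on `k'`
  have hmem : ∀ y : k', ∃ x : K, F x = (y : K) := fun y => RingHom.mem_fieldRange.mp y.2
  let fi : k' → K := fun y => (hmem y).choose
  have hfi : ∀ y : k', F (fi y) = (y : K) := fun y => (hmem y).choose_spec
  have hfi_inj : ∀ (y y' : k'), (y : K) = (y' : K) → fi y = fi y' := by
    intro y y' h; apply hFinj; rw [hfi, hfi, h]
  have hfi_add : ∀ y y' : k', fi (y + y') = fi y + fi y' := by
    intro y y'; apply hFinj; rw [hfi, map_add, Subfield.coe_add, hfi, hfi]
  have hfi_mul : ∀ y y' : k', fi (y * y') = fi y * fi y' := by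
    intro y y'; apply hFinj; rw [hfi, map_mul, Subfield.coe_mul, hfi, hfi]
  have hfi_one : fi 1 = 1 := by
    apply hFinj; rw [hfi, map_one, OneMemClass.coe_one]
  obtain ⟨Q, hQ⟩ := Submodule.exists_isCompl (Submodule.span k' {z})
  let proj := (Submodule.span k' {z}).linearProjOfIsCompl Q hQ
  let coord := LinearEquiv.coord k' K z hz
  let ℓ : K →ₗ[k'] k' := (coord : _ →ₗ[k'] k').comp proj
  have hℓz : ℓ z = 1 := by
    show coord (proj z) = 1
    have h1 : proj z = ⟨z, Submodule.mem_span_singleton_self _⟩ :=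
      Submodule.linearProjOfIsCompl_apply_left hQ ⟨z, Submodule.mem_span_singleton_self _⟩
    rw [h1]
    exact LinearEquiv.coord_self k' K z hz
  refine ⟨AddMonoidHom.mk' (fun x => fi (ℓ x)) (fun a b => by show fi (ℓ (a + b)) = fi (ℓ a) + fi (ℓ b); rw [map_add, hfi_add]), ?_, ?_⟩
  · intro c d
    show fi (ℓ (c ^ p ^ e * d)) = c * fi (ℓ d)
    have hcq : (c ^ p ^ e : K) ∈ k' := RingHom.mem_fieldRange.mpr ⟨c, by rw [iterateFrobenius_def]⟩
    have : (c ^ p ^ e * d : K) = (⟨c ^ p ^ e, hcq⟩ : k') • d := by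
      rw [Subfield.smul_def, smul_eq_mul]
    rw [this, map_smul, smul_eq_mul, hfi_mul]
    congr 1
    apply hFinj
    rw [hfi, hF, iterateFrobenius_def]
  · show fi (ℓ z) = 1
    rw [hℓz, hfi_one]

/-- Descend an additive map preserving an ideal to the quotient. -/
lemma descend {Rg : Type*} [CommRing Rg] (I : Ideal Rg) (Φ : Rg →+ Rg)
    (hΦ : ∀ f ∈ I, Φ f ∈ I) :
    ∃ φ : (Rg ⧸ I) →+ (Rg ⧸ I),
      ∀ f, φ (Ideal.Quotient.mk I f) = Ideal.Quotient.mk I (Φ f) := by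
  have hresp : ∀ a b : Rg, I.quotientRel a b →
      Ideal.Quotient.mk I (Φ a) = Ideal.Quotient.mk I (Φ b) := by
    intro a b hab
    rw [Submodule.quotientRel_def] at hab
    rw [Ideal.Quotient.eq, ← map_sub]
    exact hΦ _ hab
  let Ff : (Rg ⧸ I) → (Rg ⧸ I) := fun x =>
    Quotient.liftOn' x (fun f => Ideal.Quotient.mk I (Φ f)) hresp
  have key : ∀ f : Rg, Ff (Ideal.Quotient.mk I f) = Ideal.Quotient.mk I (Φ f) :=
    fun f => Quotient.liftOn'_mk'' _ _ f
  have hadd : ∀ x y, Ff (x + y) = Ff x + Ff y := by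
    intro x y
    obtain ⟨a, rfl⟩ := Ideal.Quotient.mk_surjective x
    obtain ⟨b, rfl⟩ := Ideal.Quotient.mk_surjective y
    rw [← map_add, key, key, key, map_add, map_add]
  exact ⟨AddMonoidHom.mk' Ff hadd, key⟩

end SRAux3

open MvPolynomial

-- pretend c1 is here; test standalone with minimal context by importing defs? We'll just
-- develop assuming names in SRAux exist. For standalone compile, include c1 content? Easier:
-- compile combined later. Here only new lemmas with local copies of defs needed.
namespace SRAux4

variable {K : Type*} [Field K] {n : ℕ}

lemma prod_mem_prime {R : Type*} [CommRing R] {P : Ideal R} (hP : P.IsPrime)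
    {ι : Type*} (s : Finset ι) (f : ι → R) (h : (∏ i ∈ s, f i) ∈ P) :
    ∃ i ∈ s, f i ∈ P := by
  classical
  induction s using Finset.induction_on with
  | empty =>
    simp only [Finset.prod_empty] at h
    exact absurd (P.eq_top_of_isUnit_mem h isUnit_one) hP.ne_top
  | insert _ _ hx ih =>
    rename_i a s'
    rw [Finset.prod_insert hx] at h
    rcases hP.mem_or_mem h with h' | h'
    · exact ⟨a, Finset.mem_insert_self _ _, h'⟩
    · obtain ⟨i, hi, hfi⟩ := ih h'
      exact ⟨i, Finset.mem_insert_of_mem hi, hfi⟩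

end SRAux4


section MainProof

open MvPolynomial

lemma mem_cartierContraction {R : Type*} [CommRing R] {p e : ℕ} {J : Ideal R} {f : R} :
    f ∈ cartierContraction p e J ↔ ∀ φ : R →+ R, IsCartier p e φ → φ f ∈ J := Iff.rfl

lemma X_eq_monomial {K : Type*} [Field K] {n : ℕ} (i : Fin n) :
    (X i : MvPolynomial (Fin n) K) = monomial (Finsupp.single i 1) 1 := rfl

/-- In a Stanley–Reisner ring `R = S/I` over an `F`-finite field of
characteristic `p`, for a monomial prime ideal `𝔮` of `R`, `e ∈ ℕ` and `q = p^e`,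
the Cartier contraction satisfies `𝔮_e = 𝔮^{[q]} + 𝒫(𝔮)`. -/
theorem cartierContraction_eq_frobeniusPower_sup_core {K : Type*} [Field K] {n : ℕ}
    (p : ℕ) (hp : p.Prime) [CharP K p] (hK : FFinite p K)
    (I : Ideal (MvPolynomial (Fin n) K)) (hI : IsSquarefreeMonomialIdeal I)
    (𝔮 : Ideal (MvPolynomial (Fin n) K ⧸ I)) (h𝔮p : 𝔮.IsPrime)
    (h𝔮 : ∃ V : Set (Fin n),
      𝔮 = Ideal.span ((fun i => Ideal.Quotient.mk I (X i)) '' V))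
    (e : ℕ) :
    cartierContraction p e 𝔮 = frobeniusPower 𝔮 (p ^ e) ⊔ cartierCore p 𝔮 := by
  classical
  obtain ⟨A, hA⟩ := hI
  obtain ⟨V₀, hV₀⟩ := h𝔮
  haveI : Fact p.Prime := ⟨hp⟩
  haveI : ExpChar (MvPolynomial (Fin n) K) p := .prime hp
  set mk' := Ideal.Quotient.mk I with hmkdef
  have hq0 : 0 < p ^ e := pow_pos hp.pos e
  have hIT : I = SRAux.spanMono K (SRAux.TI A) := by
    rw [hA]; exact SRAux.spanA_eq_spanMono_TI A
  -- the complement of the prime's variable set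
  set W : Finset (Fin n) := Finset.univ.filter (fun i => mk' (X i) ∉ 𝔮) with hWdef
  have hWmem : ∀ i : Fin n, i ∉ W ↔ mk' (X i) ∈ 𝔮 := by
    intro i; simp [hWdef]
  -- W is a face
  have hWface : ¬ SRAux.NF A W := by
    rintro ⟨N, hN, hNW⟩
    have h0 : mk' (monomial (SRAux.ind N) (1:K)) = 0 := by
      rw [Ideal.Quotient.eq_zero_iff_mem, hIT]
      exact SRAux.monomial_mem_spanMono ⟨N, hN, by rw [SRAux.ind_support]⟩
    have hprod : (∏ i ∈ N, mk' (X i)) ∈ 𝔮 := by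
      rw [← map_prod, ← SRAux.monomial_ind_eq_prod, h0]; exact 𝔮.zero_mem
    obtain ⟨i, hiN, hi𝔮⟩ := SRAux4.prod_mem_prime h𝔮p N _ hprod
    have hmem := hNW hiN
    rw [hWdef, Finset.mem_filter] at hmem
    exact hmem.2 hi𝔮
  set Q := SRAux.spanMono K (SRAux.TQ A W) with hQdef
  have hIQ : I ≤ Q := by
    rw [hIT]; exact SRAux.spanMono_mono Set.subset_union_left
  have hXQ : ∀ i : Fin n, i ∉ W → X i ∈ Q := by
    intro i hi
    rw [X_eq_monomial, hQdef]
    apply SRAux.monomial_mem_spanMono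
    exact Or.inr ⟨i, hi, by simp [Finsupp.single_apply]⟩
  have hmono0 : ∀ a : Fin n →₀ ℕ, a ∈ SRAux.TI A → mk' (monomial a (1:K)) = 0 := by
    intro a ha
    rw [Ideal.Quotient.eq_zero_iff_mem, hIT]
    exact SRAux.monomial_mem_spanMono ha
  have h𝔮Q : 𝔮 = Ideal.map mk' Q := by
    apply le_antisymm
    · rw [hV₀, Ideal.span_le]
      rintro g ⟨i, hiV, rfl⟩
      dsimp only
      apply Ideal.mem_map_of_mem
      apply hXQ
      rw [hWmem]
      exact hV₀ ▸ Ideal.subset_span ⟨i, hiV, rfl⟩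
    · rw [Ideal.map_le_iff_le_comap, hQdef, SRAux.spanMono, Ideal.span_le]
      rintro g ⟨a, ha, rfl⟩
      dsimp only
      show mk' (monomial a (1:K)) ∈ 𝔮
      rcases ha with haI | ⟨i, hiW, hne⟩
      · rw [hmono0 a haI]; exact 𝔮.zero_mem
      · have hsub : ↑({i} : Finset (Fin n)) ⊆ a.support := by
          intro j hj
          have hji : j = i := by simpa using hj
          subst hji
          exact Finsupp.mem_support_iff.mpr hne
        have hdec : monomial a (1:K)
            = monomial (a - SRAux.ind {i}) 1 * monomial (SRAux.ind {i}) 1 := by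
          rw [MvPolynomial.monomial_mul, one_mul, SRAux.le_ind_of_subset hsub]
        rw [hdec, map_mul]
        apply Ideal.mul_mem_left
        rw [SRAux.monomial_ind_eq_prod, Finset.prod_singleton]
        exact (hWmem i).mp hiW
  have hmem𝔮 : ∀ f, mk' f ∈ 𝔮 ↔ f ∈ Q := by
    intro f; rw [h𝔮Q]; exact Ideal.mem_quotient_iff_mem hIQ
  -- Frobenius power description
  set Qq := SRAux.spanMono K (SRAux.Tq A W (p ^ e)) with hQqdef
  have hfrob : frobeniusPower 𝔮 (p ^ e) = Ideal.map mk' Qq := by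
    apply le_antisymm
    · rw [frobeniusPower, Ideal.span_le]
      rintro z ⟨g0, hg, rfl⟩
      dsimp only
      rw [h𝔮Q] at hg
      obtain ⟨g, hgQ, rfl⟩ :=
        (Ideal.mem_map_iff_of_surjective mk' Ideal.Quotient.mk_surjective).mp hg
      simp only [SetLike.mem_coe]
      rw [← map_pow]
      apply Ideal.mem_map_of_mem
      have hmaple : Ideal.map (iterateFrobenius (MvPolynomial (Fin n) K) p e) Q ≤ Qq := by
        rw [hQdef, SRAux.spanMono, Ideal.map_span, Ideal.span_le]
        rintro z ⟨w, ⟨a, ha, rfl⟩, rfl⟩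
        dsimp only
        simp only [SetLike.mem_coe]
        rw [iterateFrobenius_def, MvPolynomial.monomial_pow, one_pow]
        apply SRAux.monomial_mem_spanMono
        rcases ha with haI | ⟨i, hiW, hne⟩
        · left
          show SRAux.NF A (p ^ e • a).support
          rw [SRAux.support_smul_eq hq0]
          exact haI
        · right
          refine ⟨i, hiW, ?_⟩
          rw [Finsupp.smul_apply, smul_eq_mul]
          exact Nat.le_mul_of_pos_right _ (Nat.pos_of_ne_zero hne)
      have hgp : g ^ (p ^ e) = iterateFrobenius (MvPolynomial (Fin n) K) p e g :=
        (iterateFrobenius_def p e g).symm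
      rw [hgp]
      exact hmaple (Ideal.mem_map_of_mem _ hgQ)
    · rw [Ideal.map_le_iff_le_comap, hQqdef, SRAux.spanMono, Ideal.span_le]
      rintro g ⟨a, ha, rfl⟩
      dsimp only
      simp only [SetLike.mem_coe, Ideal.mem_comap]
      rcases ha with haI | ⟨i, hiW, hqle⟩
      · rw [hmono0 a haI]; exact Ideal.zero_mem _
      · have hle : (p ^ e) • Finsupp.single i 1 ≤ a := by
          rw [Finsupp.le_def]
          intro j
          rw [Finsupp.smul_apply, Finsupp.single_apply, smul_eq_mul]
          by_cases hji : i = j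
          · subst hji; simpa using hqle
          · simp [hji]
        have hdec : monomial a (1:K)
            = monomial (a - (p ^ e) • Finsupp.single i 1) 1 * (X i) ^ (p ^ e) := by
          rw [X_eq_monomial, MvPolynomial.monomial_pow, one_pow, MvPolynomial.monomial_mul,
            one_mul, tsub_add_cancel_of_le hle]
        rw [hdec, map_mul, map_pow]
        apply Ideal.mul_mem_left
        exact Ideal.subset_span ⟨mk' (X i), (hWmem i).mp hiW, rfl⟩
  -- the part of the Cartier core we need
  set P0 := SRAux.spanMono K (SRAux.TP A W) with hP0def
  have hP0le : ∀ s : ℕ, Ideal.map mk' P0 ≤ cartierContraction p s 𝔮 := by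
    intro s
    rw [Ideal.map_le_iff_le_comap, hP0def, SRAux.spanMono, Ideal.span_le]
    rintro g ⟨a, ⟨G, hGfac, hWG, hsupp⟩, rfl⟩
    dsimp only
    simp only [SetLike.mem_coe, Ideal.mem_comap]
    rw [mem_cartierContraction]
    intro ψ hψ
    obtain ⟨i, hia, hiG⟩ := Finset.not_subset.mp hsupp
    have hGi : SRAux.NF A (insert i G) := by
      by_contra hface
      exact hiG (by
        have := hGfac.2 (insert i G) hface (Finset.subset_insert _ _)
        rw [← this]; exact Finset.mem_insert_self i G)
    have hzero : (mk' (monomial (SRAux.ind G) 1)) ^ (p ^ s) * mk' (monomial a 1) = 0 := by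
      rw [← map_pow, MvPolynomial.monomial_pow, one_pow, ← map_mul,
        MvPolynomial.monomial_mul, one_mul]
      apply hmono0
      obtain ⟨N, hN, hNi⟩ := hGi
      refine ⟨N, hN, ?_⟩
      intro j hj
      have hj' := hNi hj
      rw [SRAux.support_add_eq, Finset.mem_union,
        SRAux.support_smul_eq (pow_pos hp.pos s), SRAux.ind_support]
      rcases Finset.mem_insert.mp hj' with h | h
      · right; subst h; exact hia
      · left; exact h
    have hC := hψ (mk' (monomial (SRAux.ind G) 1)) (mk' (monomial a 1))
    rw [hzero, map_zero] at hC
    obtain ⟨h, hh⟩ := Ideal.Quotient.mk_surjective (ψ (mk' (monomial a 1)))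
    have hannih : h * monomial (SRAux.ind G) 1 ∈ SRAux.spanMono K (SRAux.TI A) := by
      rw [← hIT, ← Ideal.Quotient.eq_zero_iff_mem, map_mul, hh, mul_comm]
      exact hC.symm
    have hterms := SRAux.ann_lemma hGfac.1 hannih
    rw [← hh, hmem𝔮 h, hQdef, SRAux.mem_spanMono_iff (SRAux.TQ_up A W)]
    intro b hb
    rcases hterms b hb with hTI | hnsub
    · exact Or.inl hTI
    · obtain ⟨j, hjb, hjG⟩ := Finset.not_subset.mp hnsub
      exact Or.inr ⟨j, fun hjW => hjG (hWG hjW), Finsupp.mem_support_iff.mp hjb⟩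
  -- the hard inclusion
  have hhard : cartierContraction p e 𝔮 ≤ Ideal.map mk' Qq ⊔ Ideal.map mk' P0 := by
    intro z hz
    obtain ⟨f, rfl⟩ := Ideal.Quotient.mk_surjective z
    by_contra hnot
    rw [← Ideal.map_sup, hQqdef, hP0def, ← SRAux.spanMono_union] at hnot
    have hIE : I ≤ SRAux.spanMono K (SRAux.Tq A W (p ^ e) ∪ SRAux.TP A W) := by
      rw [hIT]
      exact SRAux.spanMono_mono (fun a ha => Or.inl (Or.inl ha))
    have hfE : f ∉ SRAux.spanMono K (SRAux.Tq A W (p ^ e) ∪ SRAux.TP A W) :=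
      fun h => hnot ((Ideal.mem_quotient_iff_mem hIE).mpr h)
    rw [SRAux.mem_spanMono_iff ((SRAux.Tq_up A W (p ^ e)).union (SRAux.TP_up A W))] at hfE
    push_neg at hfE
    obtain ⟨a, haf, haT⟩ := hfE
    have haq : a ∉ SRAux.Tq A W (p ^ e) := fun h => haT (Or.inl h)
    have haP : a ∉ SRAux.TP A W := fun h => haT (Or.inr h)
    have haV : ∀ i, i ∉ W → a i < p ^ e := by
      intro i hi
      by_contra hge
      exact haq (Or.inr ⟨i, hi, not_lt.mp hge⟩)
    have haG : ∀ G, SRAux.Facet A G → W ⊆ G → ↑a.support ⊆ G := by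
      intro G hG hWG
      by_contra hn
      exact haP ⟨G, hG, hWG, hn⟩
    -- the mod/div decomposition of the witness exponent
    set u : Fin n →₀ ℕ := Finsupp.onFinset a.support
      (fun i => if i ∈ W then a i % p ^ e else a i)
      (fun i hi => Finsupp.mem_support_iff.mpr (fun h0 => hi (by
        show (if i ∈ W then a i % p ^ e else a i) = 0
        by_cases hiW : i ∈ W
        · rw [if_pos hiW, h0, Nat.zero_mod]
        · rw [if_neg hiW, h0]))) with hudef
    set b₀ : Fin n →₀ ℕ := Finsupp.onFinset a.support
      (fun i => if i ∈ W then a i / p ^ e else 0)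
      (fun i hi => Finsupp.mem_support_iff.mpr (fun h0 => hi (by
        show (if i ∈ W then a i / p ^ e else 0) = 0
        by_cases hiW : i ∈ W
        · rw [if_pos hiW, h0, Nat.zero_div]
        · rw [if_neg hiW]))) with hbdef
    have hu_apply : ∀ i, u i = if i ∈ W then a i % p ^ e else a i := by
      intro i; rw [hudef]; exact Finsupp.onFinset_apply
    have hb_apply : ∀ i, b₀ i = if i ∈ W then a i / p ^ e else 0 := by
      intro i; rw [hbdef]; exact Finsupp.onFinset_apply
    have hdecomp : a = u + (p ^ e) • b₀ := by
      ext i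
      rw [Finsupp.add_apply, Finsupp.smul_apply, smul_eq_mul, hu_apply, hb_apply]
      by_cases hiW : i ∈ W
      · rw [if_pos hiW, if_pos hiW]; exact (Nat.mod_add_div _ _).symm
      · rw [if_neg hiW, if_neg hiW, Nat.mul_zero, Nat.add_zero]
    have hu_lt : ∀ i, u i < p ^ e := by
      intro i
      rw [hu_apply]
      by_cases hiW : i ∈ W
      · rw [if_pos hiW]; exact Nat.mod_lt _ hq0
      · rw [if_neg hiW]; exact haV i hiW
    have hu_supp : ∀ i, u i ≠ 0 → a i ≠ 0 := by
      intro i h h0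
      apply h
      rw [hu_apply]
      by_cases hiW : i ∈ W
      · rw [if_pos hiW, h0, Nat.zero_mod]
      · rw [if_neg hiW, h0]
    have hb_supp : ∀ i, b₀ i ≠ 0 → i ∈ W := by
      intro i h
      by_contra hiW
      apply h
      rw [hb_apply, if_neg hiW]
    have hca : coeff a f ≠ 0 := MvPolynomial.mem_support_iff.mp haf
    obtain ⟨φ0, hφ0c, hφ0a⟩ := SRAux3.exists_cartier_on_field K p e hp hca
    have hdesc : ∀ g ∈ I, SRAux2.Phi u (SRAux.ind W) (p ^ e) φ0 g ∈ I := by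
      intro g hg
      rw [hIT, SRAux.mem_spanMono_iff (SRAux.TI_up A)] at hg
      rw [hIT, SRAux.mem_spanMono_iff (SRAux.TI_up A)]
      intro c hcsupp
      have hcne := MvPolynomial.mem_support_iff.mp hcsupp
      obtain ⟨b, hbc⟩ := SRAux2.coeff_Phi_ne_zero hq0 φ0 g c hcne
      subst hbc
      have hco : coeff (u + (p ^ e) • b) g ≠ 0 := by
        intro h0
        rw [SRAux2.coeff_Phi hq0 φ0 g b, h0, map_zero] at hcne
        exact hcne rfl
      obtain ⟨N, hN, hNsub⟩ := hg _ (MvPolynomial.mem_support_iff.mpr hco)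
      show SRAux.NF A (b + SRAux.ind W).support
      rw [SRAux.support_add_eq, SRAux.ind_support]
      by_contra hface
      obtain ⟨G, hGfac, hGsub⟩ := SRAux.exists_facet hface
      have hWG : W ⊆ G := Finset.subset_union_right.trans hGsub
      have haGsub : ↑a.support ⊆ G := haG G hGfac hWG
      apply hGfac.1
      refine ⟨N, hN, ?_⟩
      intro j hj
      have hj2 := hNsub hj
      rw [SRAux.support_add_eq, SRAux.support_smul_eq hq0, Finset.mem_union] at hj2
      rcases hj2 with h | h
      · exact haGsub (Finsupp.mem_support_iff.mpr (hu_supp j (Finsupp.mem_support_iff.mp h)))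
      · exact hGsub (Finset.mem_union_left _ h)
    obtain ⟨ψ, hψmk⟩ := SRAux3.descend I (SRAux2.Phi u (SRAux.ind W) (p ^ e) φ0) hdesc
    have hψC : IsCartier p e ψ := by
      intro xb yb
      obtain ⟨x, rfl⟩ := Ideal.Quotient.mk_surjective xb
      obtain ⟨y, rfl⟩ := Ideal.Quotient.mk_surjective yb
      show ψ (mk' x ^ p ^ e * mk' y) = mk' x * ψ (mk' y)
      rw [← map_pow, ← map_mul, hψmk, hψmk,
        SRAux2.Phi_cartier hu_lt φ0 hφ0c x y, map_mul]
    have hz2 : ∀ φ : _ →+ _, IsCartier p e φ → φ (mk' f) ∈ 𝔮 := hz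
    have hψf := hz2 ψ hψC
    rw [hψmk, hmem𝔮, hQdef, SRAux.mem_spanMono_iff (SRAux.TQ_up A W)] at hψf
    have hcoeff : coeff (b₀ + SRAux.ind W) (SRAux2.Phi u (SRAux.ind W) (p ^ e) φ0 f) ≠ 0 := by
      rw [SRAux2.coeff_Phi hq0 φ0 f b₀, ← hdecomp, hφ0a]
      exact one_ne_zero
    have hmem2 := hψf _ (MvPolynomial.mem_support_iff.mpr hcoeff)
    rcases hmem2 with hTI | ⟨i, hiW, hi⟩
    · apply hWface
      apply hTI.mono
      rw [SRAux.support_add_eq, SRAux.ind_support]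
      apply Finset.union_subset ?_ (subset_refl W)
      intro j hj
      exact hb_supp j (Finsupp.mem_support_iff.mp hj)
    · apply hi
      rw [Finsupp.add_apply, SRAux.ind_apply, if_neg hiW, Nat.add_zero]
      by_contra hb0
      exact hiW (hb_supp i hb0)
  -- conclusion
  apply le_antisymm
  · refine hhard.trans (sup_le ?_ ?_)
    · rw [← hfrob]; exact le_sup_left
    · exact le_trans (le_iInf fun s => hP0le s) le_sup_right
  · apply sup_le
    · rw [frobeniusPower, Ideal.span_le]
      rintro z ⟨g, hg, rfl⟩
      dsimp only
      simp only [SetLike.mem_coe]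
      rw [mem_cartierContraction]
      intro φ hφ
      have h1 := hφ g 1
      rw [mul_one] at h1
      rw [h1]
      exact Ideal.mul_mem_right _ _ hg
    · exact iInf_le _ e

end MainProof
end
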